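/- Let R be a commutative ring and A : Matrix (Fin n) (Fin n) R a symmetric matrix (Aᵀ = A). Then there exists r ∈ R such that det A = ∑_{σ : σ² = 1} sgn(σ) ∏_{i} A i (σ i) + 2r, where the sum runs over all permutations σ of Fin n satisfying σ² = 1 (including the identity). -/

import Mathlib

open Equiv

/-- For a symmetric matrix, all Leibniz terms coming from non-involutive permutations
pair up, so `det A` equals the sum over involutions plus an even element. -/
theorem det_eq_involution_sum_add_even {R : Type*} [CommRing R] {n : ℕ}
    (A : Matrix (Fin n) (Fin n) R) (hA : A.IsSymm) :
    ∃ r : R, A.det =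
      (∑ σ ∈ Finset.univ.filter (fun σ : Equiv.Perm (Fin n) => σ ^ 2 = 1),
        (Equiv.Perm.sign σ : ℤ) • ∏ i, A i (σ i)) + 2 * r := by
  classical
  set f : Equiv.Perm (Fin n) → R :=
    fun σ => (Equiv.Perm.sign σ : ℤ) • ∏ i, A i (σ i) with hf
  have prod_inv : ∀ σ : Equiv.Perm (Fin n), ∏ i, A i (σ⁻¹ i) = ∏ i, A i (σ i) := by
    intro σ
    have h1 : ∏ i, A (σ i) (σ⁻¹ (σ i)) = ∏ j, A j (σ⁻¹ j) :=
      Equiv.prod_comp σ (fun j => A j (σ⁻¹ j))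
    simp only [show ∀ i, σ⁻¹ (σ i) = i from fun i => σ.symm_apply_apply i] at h1
    rw [← h1]
    exact Finset.prod_congr rfl fun i _ => hA.apply i (σ i)
  have hfinv : ∀ σ : Equiv.Perm (Fin n), f σ⁻¹ = f σ := by
    intro σ
    simp only [hf, Equiv.Perm.sign_inv, prod_inv]
  have hdet : A.det = ∑ σ : Equiv.Perm (Fin n), f σ := by
    rw [Matrix.det_apply]
    exact Finset.sum_congr rfl fun σ _ => by
      simp only [hf]
      congr 1
      exact Finset.prod_congr rfl fun i _ => hA.apply i (σ i)
  have hsplit : (∑ σ : Equiv.Perm (Fin n), f σ) =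
      (∑ σ ∈ Finset.univ.filter (fun σ : Equiv.Perm (Fin n) => σ ^ 2 = 1), f σ) +
      (∑ σ ∈ Finset.univ.filter (fun σ : Equiv.Perm (Fin n) => ¬ σ ^ 2 = 1), f σ) :=
    (Finset.sum_filter_add_sum_filter_not _ _ _).symm
  -- the second sum is divisible by 2
  have hdvd : (2 : R) ∣ ∑ σ ∈ Finset.univ.filter (fun σ : Equiv.Perm (Fin n) => ¬ σ ^ 2 = 1), f σ := by
    rw [← Ideal.mem_span_singleton, ← Ideal.Quotient.eq_zero_iff_mem, map_sum]
    refine Finset.sum_involution (fun σ _ => σ⁻¹) ?_ ?_ ?_ ?_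
    · intro σ _
      rw [hfinv, ← two_mul, ← map_ofNat (Ideal.Quotient.mk (Ideal.span {(2:R)})) 2, ← map_mul,
        Ideal.Quotient.eq_zero_iff_mem, Ideal.mem_span_singleton]
      exact Dvd.intro _ rfl
    · intro σ hσ _
      simp only [Finset.mem_filter, Finset.mem_univ, true_and] at hσ
      intro h
      apply hσ
      rw [sq]
      nth_rewrite 1 [← h]
      exact inv_mul_cancel σ
    · intro σ hσ
      simp only [Finset.mem_filter, Finset.mem_univ, true_and] at hσ ⊢
      intro hc; exact hσ (by rwa [inv_pow, inv_eq_one] at hc)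
    · intro σ _; simp
  obtain ⟨r, hr⟩ := hdvd
  exact ⟨r, by rw [hdet, hsplit, hr]⟩
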